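/- Let T be a doubly substochastic operator from (X,μ) to (Y,ν) and let Ω ⊆ X be measurable. Then T is integral-preserving on all L¹ functions supported in Ω if and only if T is integral-preserving on a single f ∈ L¹(X,μ)⁺ with supp f = Ω, if and only if T*(1) equals 1 almost everywhere on Ω. In particular, T is integral-preserving if and only if T* is unital. -/

import Mathlib

open MeasureTheory Set
open scoped ENNReal

/-- A doubly substochastic operator from `(X,μ)` to `(Y,ν)`, bundled together with its
dual doubly substochastic operator: both are positive linear maps on `L∞`, subunital,
integral-non-increasing, and related by the duality `∫ (T h)·g dν = ∫ h·(T' g) dμ`. -/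
structure DSSPair {X Y : Type*} [MeasurableSpace X] [MeasurableSpace Y]
    (μ : Measure X) (ν : Measure Y) where
  T : Lp ℝ ⊤ μ →ₗ[ℝ] Lp ℝ ⊤ ν
  T' : Lp ℝ ⊤ ν →ₗ[ℝ] Lp ℝ ⊤ μ
  posT : ∀ h : Lp ℝ ⊤ μ, (∀ᵐ x ∂μ, 0 ≤ h x) → ∀ᵐ y ∂ν, 0 ≤ (T h) y
  posT' : ∀ g : Lp ℝ ⊤ ν, (∀ᵐ y ∂ν, 0 ≤ g y) → ∀ᵐ x ∂μ, 0 ≤ (T' g) x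
  subT : ∀ h : Lp ℝ ⊤ μ, (∀ᵐ x ∂μ, h x ≤ 1) → ∀ᵐ y ∂ν, (T h) y ≤ 1
  subT' : ∀ g : Lp ℝ ⊤ ν, (∀ᵐ y ∂ν, g y ≤ 1) → ∀ᵐ x ∂μ, (T' g) x ≤ 1
  subintT : ∀ h : Lp ℝ ⊤ μ, (∀ᵐ x ∂μ, 0 ≤ h x) →
    ∫⁻ y, ENNReal.ofReal ((T h) y) ∂ν ≤ ∫⁻ x, ENNReal.ofReal (h x) ∂μ
  subintT' : ∀ g : Lp ℝ ⊤ ν, (∀ᵐ y ∂ν, 0 ≤ g y) →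
    ∫⁻ x, ENNReal.ofReal ((T' g) x) ∂μ ≤ ∫⁻ y, ENNReal.ofReal (g y) ∂ν
  duality : ∀ (h : Lp ℝ ⊤ μ) (g : Lp ℝ ⊤ ν),
    (∀ᵐ x ∂μ, 0 ≤ h x) → (∀ᵐ y ∂ν, 0 ≤ g y) →
    ∫⁻ y, ENNReal.ofReal ((T h) y * g y) ∂ν
      = ∫⁻ x, ENNReal.ofReal (h x * (T' g) x) ∂μ

/-- For a doubly substochastic operator `T` and a measurable `Ω ⊆ X`, the following are
equivalent: (a) `T` is integral-preserving on all integrable functions supported in `Ω`;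
(b) `T` is integral-preserving on a single nonnegative integrable function with support
`Ω`; (c) `T'(1) = 1` almost everywhere on `Ω`.  (The special case `Ω = X` says that `T`
is integral-preserving iff its dual is unital.) -/
theorem stmt6 {X Y : Type*} [MeasurableSpace X] [MeasurableSpace Y]
    (μ : Measure X) (ν : Measure Y) [SigmaFinite μ] [SigmaFinite ν]
    (D : DSSPair μ ν) (Ω : Set X) (hΩ : MeasurableSet Ω) :
    ((∀ h : Lp ℝ ⊤ μ, (∀ᵐ x ∂μ, 0 ≤ h x) → Integrable h μ →
        (∀ᵐ x ∂μ, x ∉ Ω → h x = 0) →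
        ∫⁻ y, ENNReal.ofReal ((D.T h) y) ∂ν = ∫⁻ x, ENNReal.ofReal (h x) ∂μ) ↔
      (∃ h : Lp ℝ ⊤ μ, (∀ᵐ x ∂μ, 0 ≤ h x) ∧ Integrable h μ ∧
        (∀ᵐ x ∂μ, h x ≠ 0 ↔ x ∈ Ω) ∧
        ∫⁻ y, ENNReal.ofReal ((D.T h) y) ∂ν = ∫⁻ x, ENNReal.ofReal (h x) ∂μ)) ∧
    ((∀ h : Lp ℝ ⊤ μ, (∀ᵐ x ∂μ, 0 ≤ h x) → Integrable h μ →
        (∀ᵐ x ∂μ, x ∉ Ω → h x = 0) →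
        ∫⁻ y, ENNReal.ofReal ((D.T h) y) ∂ν = ∫⁻ x, ENNReal.ofReal (h x) ∂μ) ↔
      (∀ g : Lp ℝ ⊤ ν, (⇑g =ᵐ[ν] fun _ => (1 : ℝ)) →
        ∀ᵐ x ∂μ, x ∈ Ω → (D.T' g) x = 1)) := by
  -- (C) → (A)
  have CtoA : (∀ g : Lp ℝ ⊤ ν, (⇑g =ᵐ[ν] fun _ => (1 : ℝ)) →
        ∀ᵐ x ∂μ, x ∈ Ω → (D.T' g) x = 1) →
      (∀ h : Lp ℝ ⊤ μ, (∀ᵐ x ∂μ, 0 ≤ h x) → Integrable h μ →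
        (∀ᵐ x ∂μ, x ∉ Ω → h x = 0) →
        ∫⁻ y, ENNReal.ofReal ((D.T h) y) ∂ν = ∫⁻ x, ENNReal.ofReal (h x) ∂μ) := by
    intro hC h hpos _ hsupp
    set g1 : Lp ℝ ⊤ ν := (memLp_top_const (1 : ℝ)).toLp _ with hg1def
    have hg1 : ⇑g1 =ᵐ[ν] fun _ => (1 : ℝ) := MemLp.coeFn_toLp _
    have hg1pos : ∀ᵐ y ∂ν, 0 ≤ g1 y := hg1.mono fun y hy => by rw [hy]; exact zero_le_one
    have hdual := D.duality h g1 hpos hg1pos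
    have hL : ∫⁻ y, ENNReal.ofReal ((D.T h) y * g1 y) ∂ν
        = ∫⁻ y, ENNReal.ofReal ((D.T h) y) ∂ν := by
      refine lintegral_congr_ae (hg1.mono fun y hy => ?_)
      dsimp only at hy ⊢
      rw [hy, mul_one]
    have hC1 := hC g1 hg1
    have hR : (fun x => h x * (D.T' g1) x) =ᵐ[μ] fun x => h x := by
      filter_upwards [hC1, hsupp] with x hx1 hx2
      by_cases hxΩ : x ∈ Ω
      · rw [hx1 hxΩ, mul_one]
      · rw [hx2 hxΩ, zero_mul]
    calc ∫⁻ y, ENNReal.ofReal ((D.T h) y) ∂ν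
        = ∫⁻ y, ENNReal.ofReal ((D.T h) y * g1 y) ∂ν := hL.symm
      _ = ∫⁻ x, ENNReal.ofReal (h x * (D.T' g1) x) ∂μ := hdual
      _ = ∫⁻ x, ENNReal.ofReal (h x) ∂μ :=
          lintegral_congr_ae (hR.mono fun x hx => by dsimp only at hx ⊢; rw [hx])
  -- (B) → (C)
  have BtoC : (∃ h : Lp ℝ ⊤ μ, (∀ᵐ x ∂μ, 0 ≤ h x) ∧ Integrable h μ ∧
        (∀ᵐ x ∂μ, h x ≠ 0 ↔ x ∈ Ω) ∧
        ∫⁻ y, ENNReal.ofReal ((D.T h) y) ∂ν = ∫⁻ x, ENNReal.ofReal (h x) ∂μ) →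
      (∀ g : Lp ℝ ⊤ ν, (⇑g =ᵐ[ν] fun _ => (1 : ℝ)) →
        ∀ᵐ x ∂μ, x ∈ Ω → (D.T' g) x = 1) := by
    rintro ⟨h, hpos, hint, hsupp, heq⟩ g hg
    have hg0 : ∀ᵐ y ∂ν, 0 ≤ g y := hg.mono fun y hy => by rw [hy]; exact zero_le_one
    have hgle : ∀ᵐ y ∂ν, g y ≤ 1 := hg.mono fun y hy => by rw [hy]
    have hT'le := D.subT' g hgle
    have hdual := D.duality h g hpos hg0
    have hL : ∫⁻ y, ENNReal.ofReal ((D.T h) y * g y) ∂ν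
        = ∫⁻ y, ENNReal.ofReal ((D.T h) y) ∂ν := by
      refine lintegral_congr_ae (hg.mono fun y hy => ?_)
      dsimp only at hy ⊢
      rw [hy, mul_one]
    -- so ∫ ofReal (h · T'g) = ∫ ofReal h
    have hkey : ∫⁻ x, ENNReal.ofReal (h x * (D.T' g) x) ∂μ
        = ∫⁻ x, ENNReal.ofReal (h x) ∂μ := by
      rw [← hdual, hL, heq]
    have hle : (fun x => ENNReal.ofReal (h x * (D.T' g) x)) ≤ᵐ[μ]
        fun x => ENNReal.ofReal (h x) := by
      filter_upwards [hpos, hT'le] with x hx1 hx2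
      exact ENNReal.ofReal_le_ofReal (by nlinarith)
    have hfin : ∫⁻ x, ENNReal.ofReal (h x) ∂μ ≠ ∞ :=
      (lintegral_ofReal_ne_top_iff_integrable (Lp.aestronglyMeasurable h) hpos).mpr hint
    have hfin' : ∫⁻ x, ENNReal.ofReal (h x * (D.T' g) x) ∂μ ≠ ∞ := by rw [hkey]; exact hfin
    have haem : AEMeasurable (fun x => ENNReal.ofReal (h x)) μ :=
      ENNReal.measurable_ofReal.comp_aemeasurable (Lp.aestronglyMeasurable h).aemeasurable
    have hae := ae_eq_of_ae_le_of_lintegral_le hle hfin' haem (le_of_eq hkey.symm)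
    have hT'0 := D.posT' g hg0
    filter_upwards [hae, hpos, hT'0, hsupp] with x h1 h2 h3 h4 hxΩ
    have hx0 : h x ≠ 0 := h4.mpr hxΩ
    have hxpos : 0 < h x := lt_of_le_of_ne h2 (Ne.symm hx0)
    have : h x * (D.T' g) x = h x := by
      rw [ENNReal.ofReal_eq_ofReal_iff (by positivity) h2] at h1
      exact h1
    exact mul_left_cancel₀ hx0 (show (h : X → ℝ) x * (D.T' g) x = h x * 1 by
      rw [mul_one]; exact this)
  -- (A) → (B)
  have AtoB : (∀ h : Lp ℝ ⊤ μ, (∀ᵐ x ∂μ, 0 ≤ h x) → Integrable h μ →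
        (∀ᵐ x ∂μ, x ∉ Ω → h x = 0) →
        ∫⁻ y, ENNReal.ofReal ((D.T h) y) ∂ν = ∫⁻ x, ENNReal.ofReal (h x) ∂μ) →
      (∃ h : Lp ℝ ⊤ μ, (∀ᵐ x ∂μ, 0 ≤ h x) ∧ Integrable h μ ∧
        (∀ᵐ x ∂μ, h x ≠ 0 ↔ x ∈ Ω) ∧
        ∫⁻ y, ENNReal.ofReal ((D.T h) y) ∂ν = ∫⁻ x, ENNReal.ofReal (h x) ∂μ) := by
    intro hA
    obtain ⟨w, wpos, wmeas, wint⟩ :=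
      exists_pos_lintegral_lt_of_sigmaFinite μ (ε := 1) one_ne_zero
    set f : X → ℝ := Ω.indicator (fun x => min (w x : ℝ) 1) with hfdef
    have hfmeas : Measurable f :=
      (wmeas.coe_nnreal_real.min measurable_const).indicator hΩ
    have hf01 : ∀ x, 0 ≤ f x ∧ f x ≤ 1 := by
      intro x
      rw [hfdef]
      by_cases hx : x ∈ Ω
      · simp only [indicator_of_mem hx]
        exact ⟨le_min (w x).2 zero_le_one, min_le_right _ _⟩
      · simp [indicator_of_notMem hx]
    have hfmem : MemLp f ⊤ μ :=
      memLp_top_of_bound hfmeas.aestronglyMeasurable 1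
        (Filter.Eventually.of_forall fun x => by
          rw [Real.norm_eq_abs, abs_of_nonneg (hf01 x).1]; exact (hf01 x).2)
    have hfint : Integrable f μ := by
      refine ⟨hfmeas.aestronglyMeasurable, ?_⟩
      rw [hasFiniteIntegral_iff_ofReal (Filter.Eventually.of_forall fun x => (hf01 x).1)]
      refine lt_of_le_of_lt (lintegral_mono fun x => ?_) (lt_trans wint ENNReal.one_lt_top)
      rw [hfdef]
      by_cases hx : x ∈ Ω
      · simp only [indicator_of_mem hx]
        refine le_trans (ENNReal.ofReal_le_ofReal (min_le_left _ _)) ?_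
        rw [ENNReal.ofReal_coe_nnreal]
      · simp [indicator_of_notMem hx]
    set h : Lp ℝ ⊤ μ := hfmem.toLp f with hhdef
    have hhf : ⇑h =ᵐ[μ] f := MemLp.coeFn_toLp _
    have hpos : ∀ᵐ x ∂μ, 0 ≤ h x := hhf.mono fun x hx => by rw [hx]; exact (hf01 x).1
    have hint : Integrable h μ := hfint.congr hhf.symm
    have hsupp0 : ∀ᵐ x ∂μ, h x ≠ 0 ↔ x ∈ Ω := by
      refine hhf.mono fun x hx => ?_
      rw [hx, hfdef]
      by_cases hxΩ : x ∈ Ω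
      · simp only [indicator_of_mem hxΩ, hxΩ, iff_true]
        exact ne_of_gt (lt_min (wpos x) zero_lt_one)
      · simp [indicator_of_notMem hxΩ, hxΩ]
    have hsupp : ∀ᵐ x ∂μ, x ∉ Ω → h x = 0 := by
      filter_upwards [hsupp0] with x hx hxΩ
      by_contra hne
      exact hxΩ (hx.mp hne)
    exact ⟨h, hpos, hint, hsupp0, hA h hpos hint hsupp⟩
  exact ⟨⟨AtoB, fun hB => CtoA (BtoC hB)⟩, ⟨fun hA => BtoC (AtoB hA), CtoA⟩⟩
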